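/- In an algebraic complete lattice L, if a, c ∈ L with c compact and c ≰ a, then there exists a completely meet-irreducible element a⁺ ∈ L such that a ≤ a⁺ and c ≰ a⁺. -/

import Mathlib

/-- An element `a` of a complete lattice is completely meet-irreducible if
whenever `a` is the infimum of a set `S`, then `a ∈ S`. -/
def CompletelyMeetIrreducible {L : Type*} [CompleteLattice L] (a : L) : Prop :=
  ∀ S : Set L, a = sInf S → a ∈ S

/-- In an algebraic (compactly generated) complete lattice, if `c` is compact and `c ≰ a`,
then there is a completely meet-irreducible `a⁺ ≥ a` with `c ≰ a⁺`. -/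
theorem exists_completelyMeetIrreducible_extension
    {L : Type*} [CompleteLattice L] [IsCompactlyGenerated L]
    (a c : L) (hc : IsCompactElement c) (h : ¬ c ≤ a) :
    ∃ aplus : L, a ≤ aplus ∧ ¬ c ≤ aplus ∧ CompletelyMeetIrreducible aplus := by
  have hchain : ∀ ch ⊆ {x : L | ¬ c ≤ x}, IsChain (· ≤ ·) ch → ∀ y ∈ ch,
      ∃ ub ∈ {x : L | ¬ c ≤ x}, ∀ z ∈ ch, z ≤ ub := by
    intro ch hch hchain y hy
    refine ⟨sSup ch, ?_, fun z hz => le_sSup hz⟩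
    intro hcsup
    rw [CompleteLattice.isCompactElement_iff_le_of_directed_sSup_le] at hc
    obtain ⟨x, hx, hcx⟩ := hc ch ⟨y, hy⟩ hchain.directedOn hcsup
    exact hch hx hcx
  obtain ⟨m, ham, hm⟩ := zorn_le_nonempty₀ {x : L | ¬ c ≤ x} hchain a h
  refine ⟨m, ham, hm.1, ?_⟩
  intro S hS
  by_contra hmS
  apply hm.1
  rw [hS, le_sInf_iff]
  intro s hsS
  have hms : m < s := lt_of_le_of_ne (hS ▸ sInf_le hsS) (fun e => hmS (e ▸ hsS))
  by_contra hcs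
  exact hms.not_ge (hm.2 hcs hms.le)
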